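/- If the service time distribution G with mean α is NBUE, i.e., ∫_t^∞ (1 − G(v)) dv ≤ α e^{−t/α} for all t ≥ 0, then the peakedness satisfies p ≤ (e^ρ − ρ − 1)/(ρ(e^ρ − 1)), the peakedness of the exponential service distribution with the same mean. -/

import Mathlib

open Real MeasureTheory Set Filter Topology

/-- If the service time distribution `G` with mean `α` is NBUE, i.e.
`∫_t^∞ (1 - G(v)) dv ≤ α e^{-t/α}` for all `t ≥ 0`, then the peakedness
satisfies `p ≤ (e^ρ - ρ - 1)/(ρ(e^ρ - 1))`. -/
theorem stmt_4 (lam α ρ : ℝ) (G : ℝ → ℝ)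
    (hlam : 0 < lam) (hα : 0 < α) (hρ : ρ = lam * α)
    (hGmono : Monotone G) (hG0 : ∀ t, 0 ≤ G t) (hG1 : ∀ t, G t ≤ 1)
    (hGint : IntegrableOn (fun v => 1 - G v) (Ioi 0))
    (hGmean : (∫ v in Ioi (0:ℝ), (1 - G v)) = α)
    (hNBUE : ∀ t ≥ (0:ℝ), (∫ v in Ioi t, (1 - G v)) ≤ α * Real.exp (-(t / α))) :
    1 + 1 / ρ -
        1 / (lam * ∫ t in Ioi (0:ℝ),
          Real.exp (-(t / α) - lam * ∫ v in (0:ℝ)..t, (1 - G v))) ≤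
    (Real.exp ρ - ρ - 1) / (ρ * (Real.exp ρ - 1)) := by
  have hρpos : 0 < ρ := hρ ▸ mul_pos hlam hα
  have hanti : Antitone (fun v => 1 - G v) := fun x y h => sub_le_sub_left (hGmono h) 1
  have hII : ∀ a b : ℝ, IntervalIntegrable (fun v => 1 - G v) volume a b :=
    fun a b => hanti.intervalIntegrable
  set P : ℝ → ℝ := fun t => ∫ v in (0:ℝ)..t, (1 - G v) with hP
  have hPcont : Continuous P := intervalIntegral.continuous_primitive hII 0
  set f : ℝ → ℝ := fun t => Real.exp (-(t / α) - lam * P t) with hfdef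
  set g : ℝ → ℝ := fun t => Real.exp (-(t / α) - lam * (α * (1 - Real.exp (-(t / α))))) with hgdef
  have hfcont : Continuous f := by
    apply Real.continuous_exp.comp
    fun_prop
  have hgcont : Continuous g := by fun_prop
  -- P t ≥ 0 for t ≥ 0
  have hPnn : ∀ t : ℝ, 0 ≤ t → 0 ≤ P t := by
    intro t ht
    apply intervalIntegral.integral_nonneg ht
    intro u _; linarith [hG1 u]
  -- f and g integrable via exp(-t/α) domination
  have hexpint : IntegrableOn (fun t : ℝ => Real.exp (-(1/α) * t)) (Ioi 0) :=
    exp_neg_integrableOn_Ioi 0 (by positivity)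
  have hfint : IntegrableOn f (Ioi 0) := by
    apply Integrable.mono' hexpint hfcont.aestronglyMeasurable
    filter_upwards [ae_restrict_mem measurableSet_Ioi] with t ht
    rw [Real.norm_eq_abs, abs_of_pos (Real.exp_pos _)]
    apply Real.exp_le_exp.mpr
    have h1 := hPnn t (le_of_lt ht)
    have h2 : 0 ≤ lam * P t := mul_nonneg hlam.le h1
    have h3 : -(1/α) * t = -(t/α) := by ring
    rw [h3]; linarith
  have hgint : IntegrableOn g (Ioi 0) := by
    apply Integrable.mono' hexpint hgcont.aestronglyMeasurable
    filter_upwards [ae_restrict_mem measurableSet_Ioi] with t ht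
    rw [Real.norm_eq_abs, abs_of_pos (Real.exp_pos _)]
    apply Real.exp_le_exp.mpr
    have h1 : Real.exp (-(t/α)) ≤ 1 := by
      apply Real.exp_le_one_iff.mpr
      have h0 : (0:ℝ) < t := ht
      have : 0 ≤ t / α := by positivity
      linarith
    have h2 : 0 ≤ lam * (α * (1 - Real.exp (-(t/α)))) := by
      apply mul_nonneg hlam.le
      apply mul_nonneg hα.le
      linarith
    have h3 : -(1/α) * t = -(t/α) := by ring
    rw [h3]; linarith
  -- key pointwise bound: f ≤ g on Ioi 0
  have hkey : ∀ t : ℝ, 0 ≤ t → α * (1 - Real.exp (-(t / α))) ≤ P t := by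
    intro t ht
    have hdisj : Disjoint (Ioc (0:ℝ) t) (Ioi t) := Ioc_disjoint_Ioi le_rfl
    have hunion : Ioc (0:ℝ) t ∪ Ioi t = Ioi 0 := Ioc_union_Ioi_eq_Ioi ht
    have hsplit : (∫ v in Ioi (0:ℝ), (1 - G v)) =
        (∫ v in Ioc (0:ℝ) t, (1 - G v)) + ∫ v in Ioi t, (1 - G v) := by
      rw [← setIntegral_union hdisj measurableSet_Ioi
        (hGint.mono_set (by rw [← hunion]; exact subset_union_left))
        (hGint.mono_set (by rw [← hunion]; exact subset_union_right)), hunion]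
    have hPt : P t = ∫ v in Ioc (0:ℝ) t, (1 - G v) := intervalIntegral.integral_of_le ht
    have hN := hNBUE t ht
    rw [hGmean] at hsplit
    nlinarith [hsplit, hN, hPt]
  have hfg : ∀ t ∈ Ioi (0:ℝ), f t ≤ g t := by
    intro t ht
    apply Real.exp_le_exp.mpr
    have := hkey t (le_of_lt ht)
    nlinarith [hlam.le]
  have hle : (∫ t in Ioi (0:ℝ), f t) ≤ ∫ t in Ioi (0:ℝ), g t :=
    setIntegral_mono_on hfint hgint measurableSet_Ioi hfg
  -- compute ∫ g exactly
  set F : ℝ → ℝ := fun t => -(α / ρ) * Real.exp (ρ * Real.exp (-(t / α)) - ρ) with hFdef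
  have hderiv : ∀ t ∈ Ici (0:ℝ), HasDerivAt F (g t) t := by
    intro t _
    have h1 : HasDerivAt (fun t : ℝ => -(t / α)) (-(1/α)) t := by
      simpa using ((hasDerivAt_id t).div_const α).fun_neg
    have h2 := (((h1.exp.const_mul ρ).sub_const ρ).exp.const_mul (-(α/ρ)))
    refine h2.congr_deriv ?_
    have hkey2 : -(α/ρ) * (Real.exp (ρ * Real.exp (-(t/α)) - ρ) * (ρ * (Real.exp (-(t/α)) * -(1/α)))) =
        Real.exp (ρ * Real.exp (-(t/α)) - ρ) * Real.exp (-(t/α)) := by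
      field_simp
    rw [hgdef]
    simp only []
    rw [hkey2, ← Real.exp_add]
    congr 1
    rw [hρ]
    ring
  have htend : Tendsto F atTop (𝓝 (-(α / ρ) * Real.exp (-ρ))) := by
    have h0 : Tendsto (fun t : ℝ => -(t / α)) atTop atBot := by
      apply tendsto_neg_atBot_iff.mpr
      exact tendsto_id.atTop_div_const hα
    have h1 : Tendsto (fun t : ℝ => Real.exp (-(t / α))) atTop (𝓝 0) :=
      Real.tendsto_exp_atBot.comp h0
    have h2 : Tendsto (fun t : ℝ => ρ * Real.exp (-(t / α)) - ρ) atTop (𝓝 (-ρ)) := by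
      have := (h1.const_mul ρ).sub_const ρ
      simpa using this
    exact ((Real.continuous_exp.tendsto _).comp h2).const_mul _
  have hgval : (∫ t in Ioi (0:ℝ), g t) = (α / ρ) * (1 - Real.exp (-ρ)) := by
    rw [integral_Ioi_of_hasDerivAt_of_tendsto' hderiv hgint htend]
    have hF0 : F 0 = -(α/ρ) := by
      rw [hFdef]
      simp [zero_div, Real.exp_zero]
    rw [hF0]
    ring
  have hIpos : 0 < ∫ t in Ioi (0:ℝ), f t := by
    rw [setIntegral_pos_iff_support_of_nonneg_ae _ hfint]
    · have hs : Function.support f ∩ Ioi (0:ℝ) = Ioi 0 := by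
        apply inter_eq_right.mpr
        intro x _
        exact (Real.exp_pos _).ne'
      rw [hs, Real.volume_Ioi]
      exact ENNReal.zero_lt_top
    · filter_upwards with t
      exact (Real.exp_pos _).le
  have hlg : lam * ((α / ρ) * (1 - Real.exp (-ρ))) = 1 - Real.exp (-ρ) := by
    rw [hρ]
    field_simp
  have h4 : lam * (∫ t in Ioi (0:ℝ), f t) ≤ 1 - Real.exp (-ρ) := by
    calc lam * (∫ t in Ioi (0:ℝ), f t) ≤ lam * ∫ t in Ioi (0:ℝ), g t :=
          mul_le_mul_of_nonneg_left hle hlam.le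
      _ = 1 - Real.exp (-ρ) := by rw [hgval, hlg]
  have h5 : 0 < lam * ∫ t in Ioi (0:ℝ), f t := mul_pos hlam hIpos
  have h6 : 1 / (1 - Real.exp (-ρ)) ≤ 1 / (lam * ∫ t in Ioi (0:ℝ), f t) :=
    one_div_le_one_div_of_le h5 h4
  have hexpρ : 1 < Real.exp ρ := by
    have := Real.exp_lt_exp.mpr hρpos
    rwa [Real.exp_zero] at this
  have hexpneg : Real.exp (-ρ) < 1 := by
    have := Real.exp_lt_exp.mpr (neg_lt_zero.mpr hρpos)
    rwa [Real.exp_zero] at this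
  have hid : 1 + 1 / ρ - 1 / (1 - Real.exp (-ρ)) =
      (Real.exp ρ - ρ - 1) / (ρ * (Real.exp ρ - 1)) := by
    have h1 : Real.exp ρ - 1 ≠ 0 := by linarith
    have h2 : 1 - Real.exp (-ρ) ≠ 0 := by linarith
    rw [Real.exp_neg] at h2 ⊢
    have h3 : Real.exp ρ ≠ 0 := (Real.exp_pos ρ).ne'
    field_simp
    ring
  linarith
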